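/- For every n ≡ 2 (mod 4) with n > 2, the simplified shuffle-cube SSQ_n contains a Hamiltonian cycle, i.e., a cycle passing through every vertex of SSQ_n exactly once. -/

import Mathlib

def bitOf {n : ℕ} (u : Fin n → Bool) (i : ℕ) : Bool :=
  if h : i < n then u ⟨i, h⟩ else false

def lowRel {n : ℕ} (u v : Fin n → Bool) : Prop :=
  ∃ i < 2, bitOf u i ≠ bitOf v i ∧ ∀ k, k ≠ i → bitOf u k = bitOf v k

def blockAgree {n : ℕ} (u v : Fin n → Bool) (j : ℕ) : Prop :=
  ∀ k, (k < 4*j - 2 ∨ 4*j + 1 < k) → bitOf u k = bitOf v k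

/-- Membership in `V_{00} = {1111, 0001, 0010, 0011}`. -/
def inV00 (x3 x2 x1 x0 : Bool) : Prop :=
  (x3, x2, x1, x0) ∈ [(true,true,true,true),(false,false,false,true),
      (false,false,true,false),(false,false,true,true)]

/-- Vertices of the simplified shuffle-cube `SSQ_n`: binary strings of length `n` with
`u_{4j+1} u_{4j} ∈ {00, 11}` for every `1 ≤ j ≤ (n-2)/4`. -/
def SSQVert (n : ℕ) : Type :=
  {u : Fin n → Bool // ∀ j, 1 ≤ j → j ≤ (n-2)/4 → bitOf u (4*j+1) = bitOf u (4*j)}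

instance {n : ℕ} : DecidableEq (SSQVert n) :=
  fun a b => decidable_of_iff (a.1 = b.1) Subtype.ext_iff.symm

def ssqRel {n : ℕ} (u v : SSQVert n) : Prop :=
  lowRel u.1 v.1 ∨ ∃ j, 1 ≤ j ∧ j ≤ (n-2)/4 ∧ blockAgree u.1 v.1 j ∧
    inV00
      (xor (bitOf u.1 (4*j+1)) (bitOf v.1 (4*j+1)))
      (xor (bitOf u.1 (4*j))   (bitOf v.1 (4*j)))
      (xor (bitOf u.1 (4*j-1)) (bitOf v.1 (4*j-1)))
      (xor (bitOf u.1 (4*j-2)) (bitOf v.1 (4*j-2)))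

/-- The `n`-dimensional simplified shuffle-cube `SSQ_n`. -/
def SSQ (n : ℕ) : SimpleGraph (SSQVert n) := SimpleGraph.fromRel ssqRel

set_option linter.unusedSectionVars false


def gray (t : ℕ) : ℕ := t ^^^ (t >>> 1)

lemma xor_succ (t : ℕ) : ∃ k, t ^^^ (t+1) = 2^(k+1) - 1 := by
  induction t using Nat.strong_induction_on with
  | _ t ih =>
    rcases Nat.even_or_odd t with ⟨a, ha⟩ | ⟨a, ha⟩
    · refine ⟨0, ?_⟩
      subst ha
      apply Nat.eq_of_testBit_eq
      intro i
      cases i with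
      | zero =>
        rw [Nat.testBit_xor]
        simp only [Nat.testBit_zero]
        have h1 : (a + a) % 2 = 0 := by omega
        have h2 : (a + a + 1) % 2 = 1 := by omega
        have h3 : (2^(0+1) - 1) % 2 = 1 := by norm_num
        rw [h1, h2, h3]
        decide
      | succ i =>
        rw [Nat.testBit_xor, Nat.testBit_add_one, Nat.testBit_add_one]
        have h1 : (a + a) / 2 = a := by omega
        have h2 : (a + a + 1) / 2 = a := by omega
        have h4 : (2:ℕ)^(0+1) - 1 = 1 := by norm_num
        rw [h1, h2, h4, Nat.testBit_add_one]
        norm_num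
    · obtain ⟨k, hk⟩ : ∃ k, a ^^^ (a+1) = 2^(k+1) - 1 := by
        by_cases h : a = 0
        · exact ⟨0, by subst h; decide⟩
        · exact ih a (by omega)
      refine ⟨k+1, ?_⟩
      apply Nat.eq_of_testBit_eq
      intro i
      cases i with
      | zero =>
        rw [Nat.testBit_xor]
        simp only [Nat.testBit_zero]
        have h1 : t % 2 = 1 := by omega
        have h2 : (t + 1) % 2 = 0 := by omega
        have h3 : (2^(k+1+1) - 1) % 2 = 1 := by
          have h5 : (2:ℕ)^(k+1+1) = 2 * 2^(k+1) := by ring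
          have h6 : 0 < (2:ℕ)^(k+1) := by positivity
          omega
        rw [h1, h2, h3]
        decide
      | succ i =>
        rw [Nat.testBit_xor, Nat.testBit_add_one, Nat.testBit_add_one]
        have h1 : t / 2 = a := by omega
        have h2 : (t + 1) / 2 = a + 1 := by omega
        rw [h1, h2, ← Nat.testBit_xor, hk, Nat.testBit_two_pow_sub_one,
          Nat.testBit_two_pow_sub_one]
        simp only [decide_eq_decide]
        omega

lemma shiftRight_xor (a b : ℕ) : (a ^^^ b) >>> 1 = (a >>> 1) ^^^ (b >>> 1) := by
  apply Nat.eq_of_testBit_eq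
  intro i
  rw [Nat.testBit_shiftRight, Nat.testBit_xor, Nat.testBit_xor,
    Nat.testBit_shiftRight, Nat.testBit_shiftRight]

lemma gray_xor_succ (t : ℕ) : ∃ k, gray t ^^^ gray (t+1) = 2^k := by
  obtain ⟨k, hk⟩ := xor_succ t
  refine ⟨k, ?_⟩
  have : gray t ^^^ gray (t+1) = (t ^^^ (t+1)) ^^^ ((t ^^^ (t+1)) >>> 1) := by
    apply Nat.eq_of_testBit_eq
    intro i
    simp only [gray, Nat.testBit_xor, Nat.testBit_shiftRight]
    cases t.testBit i <;> cases (t+1).testBit i <;>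
      cases (t.testBit (1+i)) <;> cases ((t+1).testBit (1+i)) <;> rfl
  rw [this, hk]
  apply Nat.eq_of_testBit_eq
  intro i
  rw [Nat.testBit_xor, Nat.testBit_shiftRight, Nat.testBit_two_pow,
    Nat.testBit_two_pow_sub_one, Nat.testBit_two_pow_sub_one]
  by_cases h1 : i < k+1 <;> by_cases h2 : 1+i < k+1 <;>
    simp [h1, h2] <;> omega

lemma gray_lt (B t : ℕ) (h : t < 2^B) : gray t < 2^B := by
  unfold gray
  apply Nat.xor_lt_two_pow h
  calc t >>> 1 = t / 2 := Nat.shiftRight_one t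
  _ < 2^B := by omega

lemma gray_inj : Function.Injective gray := by
  intro s t h
  unfold gray at h
  have hd : (s ^^^ t) = (s ^^^ t) >>> 1 := by
    have := congrArg (fun x => x ^^^ (s >>> 1) ^^^ t) h
    rw [shiftRight_xor]
    calc s ^^^ t = (s ^^^ s >>> 1) ^^^ (s >>> 1 ^^^ t) := by
          rw [← Nat.xor_assoc, Nat.xor_assoc s, Nat.xor_self, Nat.xor_zero]
    _ = (t ^^^ t >>> 1) ^^^ (s >>> 1 ^^^ t) := by rw [h]
    _ = s >>> 1 ^^^ t >>> 1 := by
          rw [Nat.xor_comm (s >>> 1) t, ← Nat.xor_assoc, Nat.xor_assoc t, Nat.xor_comm (t>>>1), ← Nat.xor_assoc, Nat.xor_self, Nat.zero_xor]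
          exact Nat.xor_comm _ _
  have : s ^^^ t = 0 := by
    rw [Nat.shiftRight_one] at hd
    omega
  have := congrArg (fun x => x ^^^ t) this
  simpa [Nat.xor_assoc] using this


section Ham
variable {V : Type*} [DecidableEq V] {G : SimpleGraph V}

/-- Walk from `f d` down to `f 0` along the enumeration. -/
def walkDown (f : ℕ → V) (N : ℕ) (hadj : ∀ t, t + 1 < N → G.Adj (f t) (f (t+1))) :
    (d : ℕ) → d < N → G.Walk (f d) (f 0)
  | 0, _ => SimpleGraph.Walk.nil
  | d+1, h => SimpleGraph.Walk.cons ((hadj d h).symm)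
      (walkDown f N hadj d (Nat.lt_of_succ_lt h))

lemma walkDown_support (f : ℕ → V) (N : ℕ) (hadj : ∀ t, t + 1 < N → G.Adj (f t) (f (t+1))) :
    ∀ (d : ℕ) (h : d < N),
      (walkDown f N hadj d h).support = ((List.range (d+1)).reverse).map f := by
  intro d
  induction d with
  | zero => intro h; simp [walkDown, List.range_succ]
  | succ d ih =>
    intro h
    rw [walkDown, SimpleGraph.Walk.support_cons, ih (Nat.lt_of_succ_lt h)]
    simp [List.range_succ]

lemma walkDown_edges (f : ℕ → V) (N : ℕ) (hadj : ∀ t, t + 1 < N → G.Adj (f t) (f (t+1))) :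
    ∀ (d : ℕ) (h : d < N), ∀ e ∈ (walkDown f N hadj d h).edges,
      ∃ i, i + 1 ≤ d ∧ e = s(f (i+1), f i) := by
  intro d
  induction d with
  | zero => intro h e he; simp [walkDown] at he
  | succ d ih =>
    intro h e he
    rw [walkDown, SimpleGraph.Walk.edges_cons] at he
    rcases List.mem_cons.mp he with rfl | he
    · exact ⟨d, le_refl _, rfl⟩
    · obtain ⟨i, hi, rfl⟩ := ih (Nat.lt_of_succ_lt h) e he
      exact ⟨i, Nat.le_succ_of_le hi, rfl⟩

lemma ham_of_cyclic_enum (f : ℕ → V) (N : ℕ) (hN : 3 ≤ N)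
    (hinj : ∀ s < N, ∀ t < N, f s = f t → s = t)
    (hsurj : ∀ v, ∃ t, t < N ∧ f t = v)
    (hadj : ∀ t, t + 1 < N → G.Adj (f t) (f (t+1)))
    (hwrap : G.Adj (f (N-1)) (f 0)) :
    ∃ (a : V) (p : G.Walk a a), p.IsHamiltonianCycle := by
  have hN1 : N - 1 < N := by omega
  set W := walkDown f N hadj (N-1) hN1 with hW
  have hWsupp : W.support = ((List.range N).reverse).map f := by
    have h1 : N - 1 + 1 = N := by omega
    rw [hW, walkDown_support]
    rw [h1]
  have hnodup : W.support.Nodup := by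
    rw [hWsupp]
    apply List.Nodup.map_on
    · intro x hx y hy hxy
      rw [List.mem_reverse, List.mem_range] at hx hy
      exact hinj x hx y hy hxy
    · exact List.nodup_reverse.mpr (List.nodup_range)
  have hWpath : W.IsPath := SimpleGraph.Walk.IsPath.mk' hnodup
  set Q := W.reverse with hQ
  have hQpath : Q.IsPath := hWpath.reverse
  have hne : s(f (N-1), f 0) ∉ Q.edges := by
    intro hmem
    rw [hQ, SimpleGraph.Walk.edges_reverse, List.mem_reverse] at hmem
    obtain ⟨i, hi, heq⟩ := walkDown_edges f N hadj (N-1) hN1 _ hmem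
    rw [Sym2.eq_iff] at heq
    rcases heq with ⟨h1, h2⟩ | ⟨h1, h2⟩
    · have e1 : N - 1 = i + 1 := hinj _ hN1 _ (by omega) h1
      have e2 : 0 = i := hinj 0 (by omega) i (by omega) h2
      omega
    · have e1 : N - 1 = i := hinj _ hN1 _ (by omega) h1
      have e2 : 0 = i + 1 := hinj 0 (by omega) (i+1) (by omega) h2
      omega
  set c : G.Walk (f (N-1)) (f (N-1)) := SimpleGraph.Walk.cons hwrap Q with hc
  refine ⟨f (N-1), c, ?_⟩
  rw [SimpleGraph.Walk.isHamiltonianCycle_iff_isCycle_and_support_count_tail_eq_one]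
  constructor
  · exact SimpleGraph.Path.cons_isCycle ⟨Q, hQpath⟩ hwrap hne
  · intro a
    have : c.support = f (N-1) :: Q.support := by
      rw [hc, SimpleGraph.Walk.support_cons]
    rw [this, List.tail_cons]
    have hQsupp : Q.support = (List.range N).map f := by
      rw [hQ, SimpleGraph.Walk.support_reverse, hWsupp, ← List.map_reverse,
        List.reverse_reverse]
    rw [hQsupp]
    obtain ⟨t, ht, rfl⟩ := hsurj a
    have hnd : ((List.range N).map f).Nodup := by
      apply List.Nodup.map_on
      · intro x hx y hy hxy
        rw [List.mem_range] at hx hy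
        exact hinj x hx y hy hxy
      · exact List.nodup_range
    have hmem : f t ∈ (List.range N).map f :=
      List.mem_map.mpr ⟨t, List.mem_range.mpr ht, rfl⟩
    exact List.count_eq_one_of_mem hnd hmem

end Ham



/-- vertex bits from gray-code bits -/
def vmap (m : ℕ) (g : ℕ) : Fin (4*m+2) → Bool := fun i =>
  if (i : ℕ) < 2 then g.testBit (i : ℕ)
  else if ((i:ℕ)+2) % 4 = 0 then
    xor (g.testBit (3*(((i:ℕ)+2)/4)-1)) (g.testBit (3*(((i:ℕ)+2)/4)+1))
  else if ((i:ℕ)+2) % 4 = 1 then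
    xor (g.testBit (3*(((i:ℕ)+2)/4))) (g.testBit (3*(((i:ℕ)+2)/4)+1))
  else g.testBit (3*(((i:ℕ)+2)/4)+1)

lemma bitOf_vmap_low (m g : ℕ) (i : ℕ) (h : i < 2) :
    bitOf (vmap m g) i = g.testBit i := by
  have hn : i < 4*m+2 := by omega
  simp only [bitOf, hn, dif_pos, vmap, Fin.val_mk]
  rw [if_pos h]

lemma bitOf_vmap_a (m g j : ℕ) (h1 : 1 ≤ j) (h2 : j ≤ m) :
    bitOf (vmap m g) (4*j-2) = xor (g.testBit (3*j-1)) (g.testBit (3*j+1)) := by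
  have hn : 4*j-2 < 4*m+2 := by omega
  simp only [bitOf, hn, dif_pos, vmap, Fin.val_mk]
  rw [if_neg (by omega), if_pos (by omega : (4*j-2+2) % 4 = 0)]
  have hq : (4*j-2+2)/4 = j := by omega
  rw [hq]

lemma bitOf_vmap_b (m g j : ℕ) (h1 : 1 ≤ j) (h2 : j ≤ m) :
    bitOf (vmap m g) (4*j-1) = xor (g.testBit (3*j)) (g.testBit (3*j+1)) := by
  have hn : 4*j-1 < 4*m+2 := by omega
  simp only [bitOf, hn, dif_pos, vmap, Fin.val_mk]
  rw [if_neg (by omega), if_neg (by omega), if_pos (by omega : (4*j-1+2) % 4 = 1)]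
  have hq : (4*j-1+2)/4 = j := by omega
  rw [hq]

lemma bitOf_vmap_c (m g j : ℕ) (h1 : 1 ≤ j) (h2 : j ≤ m) :
    bitOf (vmap m g) (4*j) = g.testBit (3*j+1) := by
  have hn : 4*j < 4*m+2 := by omega
  simp only [bitOf, hn, dif_pos, vmap, Fin.val_mk]
  rw [if_neg (by omega), if_neg (by omega), if_neg (by omega)]
  have hq : (4*j+2)/4 = j := by omega
  rw [hq]

lemma bitOf_vmap_d (m g j : ℕ) (h1 : 1 ≤ j) (h2 : j ≤ m) :
    bitOf (vmap m g) (4*j+1) = g.testBit (3*j+1) := by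
  have hn : 4*j+1 < 4*m+2 := by omega
  simp only [bitOf, hn, dif_pos, vmap, Fin.val_mk]
  rw [if_neg (by omega), if_neg (by omega), if_neg (by omega)]
  have hq : (4*j+1+2)/4 = j := by omega
  rw [hq]

/-- congruence: the bit `kk` of `vmap` depends only on certain gray bits -/
lemma bitOf_vmap_congr (m g g' : ℕ) (kk : ℕ)
    (h : ∀ p, ((kk < 2 ∧ p = kk) ∨
      (2 ≤ kk ∧ (p = 3*((kk+2)/4)-1 ∨ p = 3*((kk+2)/4) ∨ p = 3*((kk+2)/4)+1))) →
      g.testBit p = g'.testBit p) :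
    bitOf (vmap m g) kk = bitOf (vmap m g') kk := by
  unfold bitOf
  by_cases hn : kk < 4*m+2
  · rw [dif_pos hn, dif_pos hn]
    unfold vmap
    simp only [Fin.val_mk]
    split_ifs with c1 c2 c3
    · rw [h kk (Or.inl ⟨c1, rfl⟩)]
    · rw [h _ (Or.inr ⟨by omega, Or.inl rfl⟩), h _ (Or.inr ⟨by omega, Or.inr (Or.inr rfl)⟩)]
    · rw [h _ (Or.inr ⟨by omega, Or.inr (Or.inl rfl)⟩), h _ (Or.inr ⟨by omega, Or.inr (Or.inr rfl)⟩)]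
    · rw [h _ (Or.inr ⟨by omega, Or.inr (Or.inr rfl)⟩)]
  · rw [dif_neg hn, dif_neg hn]

/-- decode gray bit `k` from the vertex bits -/
def encB (m : ℕ) (u : Fin (4*m+2) → Bool) (k : ℕ) : Bool :=
  if k < 2 then bitOf u k
  else if (k+1) % 3 = 0 then xor (bitOf u (4*((k+1)/3)-2)) (bitOf u (4*((k+1)/3)))
  else if (k+1) % 3 = 1 then xor (bitOf u (4*((k+1)/3)-1)) (bitOf u (4*((k+1)/3)))
  else bitOf u (4*((k+1)/3))

lemma encB_vmap (m g : ℕ) (k : ℕ) (hk : k < 3*m+2) :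
    encB m (vmap m g) k = g.testBit k := by
  unfold encB
  by_cases h2 : k < 2
  · rw [if_pos h2, bitOf_vmap_low m g k h2]
  · rw [if_neg h2]
    set j := (k+1)/3 with hj
    have hj1 : 1 ≤ j := by omega
    have hjm : j ≤ m := by omega
    have hr : (k+1) % 3 = 0 ∨ (k+1) % 3 = 1 ∨ (k+1) % 3 = 2 := by omega
    rcases hr with hr | hr | hr
    · rw [if_pos hr, bitOf_vmap_a m g j hj1 hjm, bitOf_vmap_c m g j hj1 hjm]
      have hk3 : k = 3*j-1 := by omega
      rw [hk3, Bool.xor_assoc, Bool.xor_self, Bool.xor_false]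
    · rw [if_neg (by omega), if_pos hr, bitOf_vmap_b m g j hj1 hjm,
        bitOf_vmap_c m g j hj1 hjm]
      have hk3 : k = 3*j := by omega
      rw [hk3, Bool.xor_assoc, Bool.xor_self, Bool.xor_false]
    · rw [if_neg (by omega), if_neg (by omega), bitOf_vmap_c m g j hj1 hjm]
      have hk3 : k = 3*j+1 := by omega
      rw [hk3]

lemma vmap_inj (m : ℕ) (g g' : ℕ) (hg : g < 2^(3*m+2)) (hg' : g' < 2^(3*m+2))
    (h : vmap m g = vmap m g') : g = g' := by
  apply Nat.eq_of_testBit_eq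
  intro k
  by_cases hk : k < 3*m+2
  · rw [← encB_vmap m g k hk, ← encB_vmap m g' k hk, h]
  · have h1 : g < 2^k := lt_of_lt_of_le hg (Nat.pow_le_pow_right (by norm_num) (by omega))
    have h2 : g' < 2^k := lt_of_lt_of_le hg' (Nat.pow_le_pow_right (by norm_num) (by omega))
    rw [Nat.testBit_lt_two_pow h1, Nat.testBit_lt_two_pow h2]

-- ===== new content =====

lemma eq_of_xor_false {x y : Bool} (h : (x ^^ y) = false) : x = y := by
  cases x <;> cases y <;> simp_all
lemma ne_of_xor_true {x y : Bool} (h : (x ^^ y) = true) : x ≠ y := by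
  cases x <;> cases y <;> simp_all
lemma xor_xor_swap (a b c d : Bool) : ((a ^^ b) ^^ (c ^^ d)) = ((a ^^ c) ^^ (b ^^ d)) := by
  cases a <;> cases b <;> cases c <;> cases d <;> rfl

/-- The enumeration vertex. -/
def Fv (m : ℕ) (g : ℕ) : SSQVert (4*m+2) :=
  ⟨vmap m g, by
    intro j h1 h2
    have h2' : j ≤ m := by omega
    rw [bitOf_vmap_d m g j h1 h2', bitOf_vmap_c m g j h1 h2']⟩

/-- decode injectivity on actual SSQ vertices -/
lemma SSQVert_eq_of_encB (m : ℕ) (u v : SSQVert (4*m+2))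
    (h : ∀ k, k < 3*m+2 → encB m u.1 k = encB m v.1 k) : u = v := by
  apply Subtype.ext
  funext i
  have hrec : ∀ w : SSQVert (4*m+2), w.1 i = bitOf w.1 (i : ℕ) := by
    intro w
    simp [bitOf, i.isLt]
  rw [show u.1 i = bitOf u.1 (i:ℕ) from hrec u, hrec v]
  by_cases h2 : (i:ℕ) < 2
  · have e1 : encB m u.1 (i:ℕ) = bitOf u.1 (i:ℕ) := by rw [encB, if_pos h2]
    have e2 : encB m v.1 (i:ℕ) = bitOf v.1 (i:ℕ) := by rw [encB, if_pos h2]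
    rw [← e1, ← e2, h _ (by omega)]
  · -- block bits
    have hi := i.isLt
    set j := ((i:ℕ)+2)/4 with hj
    have hj1 : 1 ≤ j := by omega
    have hjm : j ≤ m := by omega
    -- encB values at 3j-1, 3j, 3j+1
    have ea : ∀ w : SSQVert (4*m+2),
        encB m w.1 (3*j-1) = xor (bitOf w.1 (4*j-2)) (bitOf w.1 (4*j)) := by
      intro w
      rw [encB, if_neg (by omega), if_pos (by omega : (3*j-1+1) % 3 = 0)]
      have : (3*j-1+1)/3 = j := by omega
      rw [this]
    have eb : ∀ w : SSQVert (4*m+2),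
        encB m w.1 (3*j) = xor (bitOf w.1 (4*j-1)) (bitOf w.1 (4*j)) := by
      intro w
      rw [encB, if_neg (by omega), if_neg (by omega), if_pos (by omega : (3*j+1) % 3 = 1)]
      have : (3*j+1)/3 = j := by omega
      rw [this]
    have ec : ∀ w : SSQVert (4*m+2),
        encB m w.1 (3*j+1) = bitOf w.1 (4*j) := by
      intro w
      rw [encB, if_neg (by omega), if_neg (by omega), if_neg (by omega)]
      have : (3*j+1+1)/3 = j := by omega
      rw [this]
    have hc : bitOf u.1 (4*j) = bitOf v.1 (4*j) := by
      rw [← ec u, ← ec v, h _ (by omega)]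
    have hr : ((i:ℕ)+2) % 4 = 0 ∨ ((i:ℕ)+2) % 4 = 1 ∨ ((i:ℕ)+2) % 4 = 2
        ∨ ((i:ℕ)+2) % 4 = 3 := by omega
    rcases hr with hr | hr | hr | hr
    · have hi4 : (i:ℕ) = 4*j-2 := by omega
      rw [hi4]
      have h1 := h _ (by omega : 3*j-1 < 3*m+2)
      rw [ea u, ea v] at h1
      have := congrArg (fun x => xor x (bitOf v.1 (4*j))) h1
      rw [Bool.xor_assoc, hc, Bool.xor_self, Bool.xor_false] at this
      rw [this, Bool.xor_assoc, Bool.xor_self, Bool.xor_false]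
    · have hi4 : (i:ℕ) = 4*j-1 := by omega
      rw [hi4]
      have h1 := h _ (by omega : 3*j < 3*m+2)
      rw [eb u, eb v] at h1
      have := congrArg (fun x => xor x (bitOf v.1 (4*j))) h1
      rw [Bool.xor_assoc, hc, Bool.xor_self, Bool.xor_false] at this
      rw [this, Bool.xor_assoc, Bool.xor_self, Bool.xor_false]
    · have hi4 : (i:ℕ) = 4*j := by omega
      rw [hi4]; exact hc
    · have hi4 : (i:ℕ) = 4*j+1 := by omega
      rw [hi4]
      have h2' : (4*m+2-2)/4 = m := by omega
      rw [u.2 j hj1 (by omega), v.2 j hj1 (by omega)]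
      exact hc

/-- Adjacency along a single gray-bit flip. -/
lemma adj_of_pow_diff (m : ℕ) (g g' : ℕ) (k : ℕ) (hk : k < 3*m+2)
    (hd : ∀ p, ((g.testBit p) ^^ (g'.testBit p)) = decide (p = k)) :
    (SSQ (4*m+2)).Adj (Fv m g) (Fv m g') := by
  rw [SSQ, SimpleGraph.fromRel_adj]
  constructor
  · -- ne
    intro he
    have h1 : bitOf (vmap m g) = bitOf (vmap m g') := by
      have : (Fv m g).1 = (Fv m g').1 := congrArg Subtype.val he
      rw [show (Fv m g).1 = vmap m g from rfl, show (Fv m g').1 = vmap m g' from rfl] at this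
      rw [this]
    have h2 : encB m (vmap m g) k = encB m (vmap m g') k := by
      unfold encB
      rw [h1]
    rw [encB_vmap m g k hk, encB_vmap m g' k hk] at h2
    have := hd k
    simp only [decide_eq_true_eq] at this
    exact ne_of_xor_true (by rw [this]; simp) h2
  · left
    show lowRel (vmap m g) (vmap m g') ∨ _
    by_cases hk2 : k < 2
    · left
      refine ⟨k, hk2, ?_, ?_⟩
      · rw [bitOf_vmap_low m g k hk2, bitOf_vmap_low m g' k hk2]
        exact ne_of_xor_true (by rw [hd k]; simp) 
      · intro kk hkk
        apply bitOf_vmap_congr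
        intro p hp
        apply eq_of_xor_false
        rw [hd p]
        have : p ≠ k := by
          rcases hp with ⟨hl, rfl⟩ | ⟨hl, hp⟩
          · exact hkk
          · rcases hp with rfl | rfl | rfl <;> omega
        simp [this]
    · right
      set j := (k+1)/3 with hj
      have hj1 : 1 ≤ j := by omega
      have hjm : j ≤ m := by omega
      refine ⟨j, hj1, by omega, ?_, ?_⟩
      · -- blockAgree
        intro kk hkk
        apply bitOf_vmap_congr
        intro p hp
        apply eq_of_xor_false
        rw [hd p]
        have : p ≠ k := by
          rcases hp with ⟨hl, rfl⟩ | ⟨hl, hp⟩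
          · omega
          · rcases hp with rfl | rfl | rfl <;> omega
        simp [this]
      · -- inV00
        have hda : ∀ p, (bitOf (vmap m g) p ^^ bitOf (vmap m g') p) =
            (bitOf (vmap m g) p ^^ bitOf (vmap m g') p) := fun _ => rfl
        rw [show (Fv m g).1 = vmap m g from rfl, show (Fv m g').1 = vmap m g' from rfl]
        rw [bitOf_vmap_d m g j hj1 hjm, bitOf_vmap_d m g' j hj1 hjm,
          bitOf_vmap_c m g j hj1 hjm, bitOf_vmap_c m g' j hj1 hjm,
          bitOf_vmap_b m g j hj1 hjm, bitOf_vmap_b m g' j hj1 hjm,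
          bitOf_vmap_a m g j hj1 hjm, bitOf_vmap_a m g' j hj1 hjm]
        rw [xor_xor_swap (g.testBit (3*j)) (g.testBit (3*j+1)) (g'.testBit (3*j))
            (g'.testBit (3*j+1)),
          xor_xor_swap (g.testBit (3*j-1)) (g.testBit (3*j+1)) (g'.testBit (3*j-1))
            (g'.testBit (3*j+1)), hd, hd, hd]
        have hr : (k+1) % 3 = 0 ∨ (k+1) % 3 = 1 ∨ (k+1) % 3 = 2 := by omega
        rcases hr with hr | hr | hr
        · have b1 : decide (3*j+1 = k) = false := by rw [decide_eq_false_iff_not]; omega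
          have b2 : decide (3*j = k) = false := by rw [decide_eq_false_iff_not]; omega
          have b3 : decide (3*j-1 = k) = true := by rw [decide_eq_true_eq]; omega
          rw [b1, b2, b3]
          simp [inV00]
        · have b1 : decide (3*j+1 = k) = false := by rw [decide_eq_false_iff_not]; omega
          have b2 : decide (3*j = k) = true := by rw [decide_eq_true_eq]; omega
          have b3 : decide (3*j-1 = k) = false := by rw [decide_eq_false_iff_not]; omega
          rw [b1, b2, b3]
          simp [inV00]
        · have b1 : decide (3*j+1 = k) = true := by rw [decide_eq_true_eq]; omega
          have b2 : decide (3*j = k) = false := by rw [decide_eq_false_iff_not]; omega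
          have b3 : decide (3*j-1 = k) = false := by rw [decide_eq_false_iff_not]; omega
          rw [b1, b2, b3]
          simp [inV00]


lemma gray_last (B : ℕ) (hB : 1 ≤ B) : gray (2^B - 1) = 2^(B-1) := by
  obtain ⟨C, rfl⟩ : ∃ C, B = C + 1 := ⟨B-1, by omega⟩
  unfold gray
  have hp : 0 < (2:ℕ)^C := by positivity
  have hs : (2:ℕ)^(C+1) = 2 * 2^C := by ring
  have h2 : (2^(C+1) - 1) >>> 1 = 2^C - 1 := by
    rw [Nat.shiftRight_one]
    omega
  rw [h2]
  have hC : C + 1 - 1 = C := by omega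
  rw [hC]
  apply Nat.eq_of_testBit_eq
  intro i
  rw [Nat.testBit_xor, Nat.testBit_two_pow_sub_one, Nat.testBit_two_pow_sub_one,
    Nat.testBit_two_pow]
  by_cases h1 : i < C + 1 <;> by_cases h3 : i < C <;> simp [h1, h3] <;> omega

/-- For every `n ≡ 2 (mod 4)` with `n > 2`, the simplified shuffle-cube `SSQ_n`
contains a Hamiltonian cycle. -/
theorem SSQ_hamiltonian (n : ℕ) (hn : n % 4 = 2) (hn2 : 2 < n) :
    ∃ (a : SSQVert n) (p : (SSQ n).Walk a a), p.IsHamiltonianCycle := by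
  classical
  obtain ⟨m, rfl⟩ : ∃ m, n = 4*m+2 := ⟨n/4, by omega⟩
  have hm : 1 ≤ m := by omega
  set B := 3*m+2 with hB
  set N := 2^B with hN
  set enc : SSQVert (4*m+2) → (Fin B → Bool) := fun u k => encB m u.1 (k:ℕ) with henc
  have enc_inj : Function.Injective enc := by
    intro u v h
    apply SSQVert_eq_of_encB
    intro k hk
    exact congrFun h ⟨k, hk⟩
  haveI : Fintype (SSQVert (4*m+2)) := Fintype.ofInjective enc enc_inj
  set f : ℕ → SSQVert (4*m+2) := fun t => Fv m (gray t) with hf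
  have hgl : ∀ t, t < N → gray t < 2^B := fun t ht => gray_lt B t ht
  have hinj : ∀ s < N, ∀ t < N, f s = f t → s = t := by
    intro s hs t ht h
    apply gray_inj
    apply vmap_inj m _ _ (hgl s hs) (hgl t ht)
    exact congrArg Subtype.val h
  have hinj' : Function.Injective (fun t : Fin N => f t) := by
    intro s t h
    exact Fin.ext (hinj s s.isLt t t.isLt h)
  have hcard : Fintype.card (Fin N) = Fintype.card (SSQVert (4*m+2)) := by
    have h1 := Fintype.card_le_of_injective _ hinj'
    have h2 := Fintype.card_le_of_injective enc enc_inj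
    have h3 : Fintype.card (Fin B → Bool) = 2^B := by
      simp [Fintype.card_fun]
    have h4 : Fintype.card (Fin N) = N := Fintype.card_fin N
    omega
  have hsurj' : Function.Surjective (fun t : Fin N => f t) :=
    ((Fintype.bijective_iff_injective_and_card _).mpr ⟨hinj', hcard⟩).2
  have hsurj : ∀ v, ∃ t, t < N ∧ f t = v := by
    intro v
    obtain ⟨t, ht⟩ := hsurj' v
    exact ⟨(t:ℕ), t.isLt, ht⟩
  have hadj : ∀ t, t + 1 < N → (SSQ (4*m+2)).Adj (f t) (f (t+1)) := by
    intro t ht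
    obtain ⟨k, hk⟩ := gray_xor_succ t
    have hkB : k < B := by
      have h1 : gray t ^^^ gray (t+1) < 2^B :=
        Nat.xor_lt_two_pow (hgl t (by omega)) (hgl (t+1) ht)
      rw [hk] at h1
      exact (Nat.pow_lt_pow_iff_right (by norm_num)).mp h1
    apply adj_of_pow_diff m _ _ k hkB
    intro p
    have h5 := congrArg (fun x => x.testBit p) hk
    simp only [Nat.testBit_xor, Nat.testBit_two_pow] at h5
    rw [h5]
    simp [eq_comm]
  have hwrap : (SSQ (4*m+2)).Adj (f (N-1)) (f 0) := by
    apply adj_of_pow_diff m _ _ (B-1) (by omega)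
    intro p
    have hg0 : gray 0 = 0 := rfl
    have hgN : gray (N-1) = 2^(B-1) := gray_last B (by omega)
    rw [hg0, hgN, Nat.zero_testBit, Bool.xor_false, Nat.testBit_two_pow]
    simp [eq_comm]
  have hN3 : 3 ≤ N := by
    have : (2:ℕ)^2 ≤ 2^B := Nat.pow_le_pow_right (by norm_num) (by omega)
    omega
  exact ham_of_cyclic_enum f N hN3 hinj hsurj hadj hwrap
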